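/- If ν > 0 or d ≥ 3, then λ² ∫_{T^d} Γ̂(k) / (λ + Φ(k))² dk → 0 as λ → 0⁺, where Γ̂(k) = 1/ω(k)² = 1/(ν + 4α Σ_j sin²(π k_j)) and Φ(k) = 8 Σ_j sin²(π k_j) (for d ≥ 2) or Φ(k) = (4/3)sin²(πk)(1+2cos²(πk)) (for d = 1). -/

import Mathlib

open Real MeasureTheory Filter
open scoped Topology

/-- Scattering rate: `Φ(k) = 8 Σ_j sin²(π k_j)` for `d ≥ 2`, and
`Φ(k) = (4/3) sin²(πk)(1 + 2cos²(πk))` for `d = 1`. -/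
noncomputable def PhiRate (d : ℕ) (k : Fin d → ℝ) : ℝ :=
  if h : d = 1 then
    (4 / 3) * Real.sin (π * k (Fin.cast h.symm 0)) ^ 2 *
      (1 + 2 * Real.cos (π * k (Fin.cast h.symm 0)) ^ 2)
  else 8 * ∑ m : Fin d, Real.sin (π * k m) ^ 2

/-- The unit cube `[0,1)^d`, representing the torus `T^d`. -/
def unitBox (d : ℕ) : Set (Fin d → ℝ) := Set.pi Set.univ fun _ => Set.Ico 0 1

noncomputable def gfun (x : ℝ) : ℝ := x ^ (-(2:ℝ)/3) + (1 - x) ^ (-(2:ℝ)/3)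

lemma gfun_nonneg {x : ℝ} (h0 : 0 ≤ x) (h1 : x ≤ 1) : 0 ≤ gfun x := by
  unfold gfun
  have := Real.rpow_nonneg h0 (-(2:ℝ)/3)
  have := Real.rpow_nonneg (by linarith : (0:ℝ) ≤ 1 - x) (-(2:ℝ)/3)
  linarith

lemma jordan {a : ℝ} (h0 : 0 < a) (h1 : a ≤ 1/2) :
    Real.sin (π * a) ^ (-(2:ℝ)/3) ≤ a ^ (-(2:ℝ)/3) := by
  have h2 : 2 * a ≤ Real.sin (π / 2 * (2 * a)) :=
    Real.le_sin_mul (by linarith) (by linarith)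
  have h3 : π / 2 * (2 * a) = π * a := by ring
  rw [h3] at h2
  calc Real.sin (π * a) ^ (-(2:ℝ)/3) ≤ (2 * a) ^ (-(2:ℝ)/3) :=
        Real.rpow_le_rpow_of_nonpos (by linarith) h2 (by norm_num)
    _ ≤ a ^ (-(2:ℝ)/3) :=
        Real.rpow_le_rpow_of_nonpos h0 (by linarith) (by norm_num)

lemma sin_rpow_le_gfun {a : ℝ} (h0 : 0 < a) (h1 : a < 1) :
    (Real.sin (π * a) ^ 2) ^ (-(1:ℝ)/3) ≤ gfun a := by
  have hsin : 0 ≤ Real.sin (π * a) := by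
    apply Real.sin_nonneg_of_nonneg_of_le_pi
    · positivity
    · nlinarith [Real.pi_pos]
  have key : (Real.sin (π * a) ^ 2) ^ (-(1:ℝ)/3) = Real.sin (π * a) ^ (-(2:ℝ)/3) := by
    rw [← Real.rpow_natCast (Real.sin (π * a)) 2, ← Real.rpow_mul hsin]
    norm_num
  rw [key]
  rcases le_or_gt a (1/2) with hc | hc
  · calc Real.sin (π * a) ^ (-(2:ℝ)/3) ≤ a ^ (-(2:ℝ)/3) := jordan h0 hc
      _ ≤ gfun a := by
          unfold gfun
          have : (0:ℝ) ≤ (1-a) ^ (-(2:ℝ)/3) := Real.rpow_nonneg (by linarith) _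
          linarith
  · have hs : Real.sin (π * a) = Real.sin (π * (1 - a)) := by
      rw [mul_sub, mul_one, Real.sin_pi_sub]
    rw [hs]
    calc Real.sin (π * (1 - a)) ^ (-(2:ℝ)/3) ≤ (1 - a) ^ (-(2:ℝ)/3) :=
          jordan (by linarith) (by linarith)
      _ ≤ gfun a := by
          unfold gfun
          have : (0:ℝ) ≤ a ^ (-(2:ℝ)/3) := Real.rpow_nonneg (by linarith) _
          linarith

lemma gfun_integrableOn : IntegrableOn gfun (Set.Ico (0:ℝ) 1) := by
  have h1 : IntervalIntegrable (fun x : ℝ => x ^ (-(2:ℝ)/3)) volume 0 1 :=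
    intervalIntegral.intervalIntegrable_rpow' (by norm_num)
  have h2 : IntervalIntegrable (fun x : ℝ => (1 - x) ^ (-(2:ℝ)/3)) volume 0 1 := by
    have := h1.comp_sub_left 1
    simpa using this.symm
  have h3 : IntervalIntegrable gfun volume 0 1 := h1.add h2
  have h4 : IntegrableOn gfun (Set.Ioc (0:ℝ) 1) :=
    (intervalIntegrable_iff_integrableOn_Ioc_of_le (by norm_num)).mp h3
  rw [integrableOn_Ico_iff_integrableOn_Ioo]
  exact h4.mono_set Set.Ioo_subset_Ioc_self


noncomputable def Bfun (d : ℕ) (j : Fin d) : ℝ → ℝ :=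
  (Set.Ico (0:ℝ) 1).indicator (fun x => if (j:ℕ) < 3 then gfun x else 1)

lemma Bfun_integrable (d : ℕ) (j : Fin d) : Integrable (Bfun d j) volume := by
  unfold Bfun
  rw [integrable_indicator_iff measurableSet_Ico]
  by_cases h : (j:ℕ) < 3
  · simp only [h, if_true]
    exact gfun_integrableOn
  · simp only [h, if_false]
    refine integrableOn_const ?_
    rw [Real.volume_Ico]
    norm_num

lemma prod_integrable (d : ℕ) :
    Integrable (fun k : Fin d → ℝ => ∏ j : Fin d, Bfun d j (k j)) volume :=
  Integrable.fintype_prod (fun j => Bfun_integrable d j)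

lemma key_bound (d : ℕ) (hd3 : 3 ≤ d) (α ν : ℝ) (hα : 0 < α) (hν : 0 ≤ ν)
    (k : Fin d → ℝ) (hk : k ∈ unitBox d)
    (h0 : ∀ j : Fin d, (j : ℕ) < 3 → k j ≠ 0) :
    1 / (ν + 4 * α * ∑ j : Fin d, Real.sin (π * k j) ^ 2) ≤
      (12 * α)⁻¹ * ∏ j : Fin d, Bfun d j (k j) := by
  set i₀ : Fin d := ⟨0, by omega⟩
  set i₁ : Fin d := ⟨1, by omega⟩
  set i₂ : Fin d := ⟨2, by omega⟩
  set s : Fin d → ℝ := fun j => Real.sin (π * k j) ^ 2 with hs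
  have hmem : ∀ j, k j ∈ Set.Ico (0:ℝ) 1 := fun j => hk j (Set.mem_univ j)
  have hko : ∀ j : Fin d, (j : ℕ) < 3 → 0 < k j ∧ k j < 1 := by
    intro j hj
    exact ⟨lt_of_le_of_ne (hmem j).1 (Ne.symm (h0 j hj)), (hmem j).2⟩
  have hspos : ∀ j : Fin d, (j : ℕ) < 3 → 0 < s j := by
    intro j hj
    obtain ⟨ha, hb⟩ := hko j hj
    have : 0 < Real.sin (π * k j) := by
      apply Real.sin_pos_of_pos_of_lt_pi
      · positivity
      · nlinarith [Real.pi_pos]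
    positivity
  have hi0 : (i₀ : ℕ) < 3 := by simp [i₀]
  have hi1 : (i₁ : ℕ) < 3 := by simp [i₁]
  have hi2 : (i₂ : ℕ) < 3 := by simp [i₂]
  -- AM-GM
  have amgm : s i₀ ^ ((1:ℝ)/3) * s i₁ ^ ((1:ℝ)/3) * s i₂ ^ ((1:ℝ)/3) ≤
      (1:ℝ)/3 * s i₀ + (1:ℝ)/3 * s i₁ + (1:ℝ)/3 * s i₂ :=
    Real.geom_mean_le_arith_mean3_weighted (by norm_num) (by norm_num) (by norm_num)
      (hspos i₀ hi0).le (hspos i₁ hi1).le (hspos i₂ hi2).le (by norm_num)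
  set P : ℝ := s i₀ ^ ((1:ℝ)/3) * s i₁ ^ ((1:ℝ)/3) * s i₂ ^ ((1:ℝ)/3) with hP
  have hPpos : 0 < P := by
    have := Real.rpow_pos_of_pos (hspos i₀ hi0) ((1:ℝ)/3)
    have := Real.rpow_pos_of_pos (hspos i₁ hi1) ((1:ℝ)/3)
    have := Real.rpow_pos_of_pos (hspos i₂ hi2) ((1:ℝ)/3)
    positivity
  -- sum of three ≤ total sum
  have hsub : s i₀ + s i₁ + s i₂ ≤ ∑ j : Fin d, s j := by
    have hne01 : i₀ ≠ i₁ := by simp [i₀, i₁, Fin.ext_iff]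
    have hne02 : i₀ ≠ i₂ := by simp [i₀, i₂, Fin.ext_iff]
    have hne12 : i₁ ≠ i₂ := by simp [i₁, i₂, Fin.ext_iff]
    have heq : ∑ j ∈ ({i₀, i₁, i₂} : Finset (Fin d)), s j = s i₀ + s i₁ + s i₂ := by
      rw [Finset.sum_insert (by simp [hne01, hne02]),
        Finset.sum_insert (by simp [hne12]), Finset.sum_singleton]
      ring
    rw [← heq]
    apply Finset.sum_le_sum_of_subset_of_nonneg (Finset.subset_univ _)
    intro i _ _
    positivity
  have hden : 12 * α * P ≤ ν + 4 * α * ∑ j : Fin d, Real.sin (π * k j) ^ 2 := by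
    have h3P : 3 * P ≤ ∑ j : Fin d, s j := by linarith
    have : ∑ j : Fin d, s j = ∑ j : Fin d, Real.sin (π * k j) ^ 2 := rfl
    nlinarith
  have step1 : 1 / (ν + 4 * α * ∑ j : Fin d, Real.sin (π * k j) ^ 2) ≤ 1 / (12 * α * P) :=
    one_div_le_one_div_of_le (by positivity) hden
  have step2 : 1 / (12 * α * P) = (12 * α)⁻¹ *
      (s i₀ ^ (-(1:ℝ)/3) * s i₁ ^ (-(1:ℝ)/3) * s i₂ ^ (-(1:ℝ)/3)) := by
    have hrw : ∀ j : Fin d, (j : ℕ) < 3 → s j ^ (-(1:ℝ)/3) = (s j ^ ((1:ℝ)/3))⁻¹ := by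
      intro j hj
      rw [show (-(1:ℝ)/3) = -((1:ℝ)/3) by norm_num, Real.rpow_neg (hspos j hj).le]
    rw [hrw i₀ hi0, hrw i₁ hi1, hrw i₂ hi2, hP]
    field_simp
  -- product over box equals triple product
  have hprod : ∏ j : Fin d, Bfun d j (k j) = gfun (k i₀) * gfun (k i₁) * gfun (k i₂) := by
    have hB : ∀ j : Fin d, Bfun d j (k j) = if (j:ℕ) < 3 then gfun (k j) else 1 := by
      intro j
      unfold Bfun
      rw [Set.indicator_of_mem (hmem j)]
    simp_rw [hB]
    rw [← Finset.prod_filter]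
    have hfil : Finset.univ.filter (fun j : Fin d => (j:ℕ) < 3) = {i₀, i₁, i₂} := by
      ext j
      simp only [Finset.mem_filter, Finset.mem_univ, true_and, Finset.mem_insert,
        Finset.mem_singleton, Fin.ext_iff, i₀, i₁, i₂]
      omega
    rw [hfil, Finset.prod_insert (by simp [i₀, i₁, i₂, Fin.ext_iff]),
      Finset.prod_insert (by simp [i₁, i₂, Fin.ext_iff]), Finset.prod_singleton]
    ring
  rw [hprod]
  refine step1.trans ?_
  rw [step2]
  have hg : ∀ j : Fin d, (j : ℕ) < 3 → s j ^ (-(1:ℝ)/3) ≤ gfun (k j) := by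
    intro j hj
    exact sin_rpow_le_gfun (hko j hj).1 (hko j hj).2
  have hnn : ∀ j : Fin d, (j : ℕ) < 3 → 0 ≤ s j ^ (-(1:ℝ)/3) := by
    intro j hj
    exact (Real.rpow_pos_of_pos (hspos j hj) _).le
  have g0 : 0 ≤ gfun (k i₀) := gfun_nonneg (hko i₀ hi0).1.le (hko i₀ hi0).2.le
  have g1 : 0 ≤ gfun (k i₁) := gfun_nonneg (hko i₁ hi1).1.le (hko i₁ hi1).2.le
  exact mul_le_mul_of_nonneg_left
    (mul_le_mul (mul_le_mul (hg i₀ hi0) (hg i₁ hi1) (hnn i₁ hi1) g0)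
      (hg i₂ hi2) (hnn i₂ hi2) (mul_nonneg g0 g1)) (by positivity)

/-- If `ν > 0` or `d ≥ 3`, then
`λ² ∫_{T^d} Γ̂(k)/(λ + Φ(k))² dk → 0` as `λ → 0⁺`, where
`Γ̂(k) = 1/(ν + 4α Σ_j sin²(π k_j))`. -/
theorem lambda_sq_resolvent_integral_vanishes (d : ℕ) (hd : 0 < d)
    (α ν : ℝ) (hα : 0 < α) (hν : 0 ≤ ν) (h : 0 < ν ∨ 3 ≤ d) :
    Tendsto
      (fun lam : ℝ => lam ^ 2 *
        ∫ k in unitBox d,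
          (1 / (ν + 4 * α * ∑ j : Fin d, Real.sin (π * k j) ^ 2)) /
            (lam + PhiRate d k) ^ 2)
      (𝓝[>] 0) (𝓝 0) := by
  have measBox : MeasurableSet (unitBox d) :=
    MeasurableSet.univ_pi fun _ => measurableSet_Ico
  set Γ : (Fin d → ℝ) → ℝ :=
    fun k => 1 / (ν + 4 * α * ∑ j : Fin d, Real.sin (π * k j) ^ 2) with hΓ
  have hsum_nn : ∀ k : Fin d → ℝ, 0 ≤ ∑ j : Fin d, Real.sin (π * k j) ^ 2 :=
    fun k => Finset.sum_nonneg fun j _ => sq_nonneg _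
  have hΓnn : ∀ k, 0 ≤ Γ k := by
    intro k
    apply one_div_nonneg.2
    have := hsum_nn k
    positivity
  have hΓmeas : Measurable Γ := by
    have hD : Continuous fun k : Fin d → ℝ => ν + 4 * α * ∑ j : Fin d, Real.sin (π * k j) ^ 2 := by
      fun_prop
    exact measurable_const.div hD.measurable
  have hΦcont : Continuous (PhiRate d) := by
    unfold PhiRate; split
    · fun_prop
    · fun_prop
  have hΦnn : ∀ k, 0 ≤ PhiRate d k := by
    intro k; unfold PhiRate; split
    · positivity
    · positivity
  have hΦpos : ∀ k ∈ unitBox d, k ⟨0, hd⟩ ≠ 0 → 0 < PhiRate d k := by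
    intro k hk h0
    have hmem : ∀ j, k j ∈ Set.Ico (0:ℝ) 1 := fun j => hk j (Set.mem_univ j)
    have hsin : 0 < Real.sin (π * k ⟨0, hd⟩) := by
      have h1 := hmem ⟨0, hd⟩
      apply Real.sin_pos_of_pos_of_lt_pi
      · have : 0 < k ⟨0, hd⟩ := lt_of_le_of_ne h1.1 (Ne.symm h0)
        positivity
      · have : k ⟨0, hd⟩ < 1 := h1.2
        nlinarith [Real.pi_pos]
    unfold PhiRate; split
    · rename_i h1
      have : (Fin.cast h1.symm 0 : Fin d) = ⟨0, hd⟩ := by subst h1; rfl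
      rw [this]
      positivity
    · have hpos : 0 < ∑ m : Fin d, Real.sin (π * k m) ^ 2 := by
        apply Finset.sum_pos' (fun i _ => by positivity)
        exact ⟨⟨0, hd⟩, Finset.mem_univ _, by positivity⟩
      linarith
  -- a.e., no coordinate equals 0
  have hae : ∀ᵐ k : Fin d → ℝ, ∀ j : Fin d, k j ≠ 0 := by
    rw [ae_all_iff]
    intro j
    have := MeasureTheory.Measure.ae_eval_ne (fun _ : Fin d => (volume : Measure ℝ)) j (0:ℝ)
    rwa [← volume_pi] at this
  -- the dominating bound
  obtain ⟨bound, hbint, hbd⟩ : ∃ bound : (Fin d → ℝ) → ℝ,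
      IntegrableOn bound (unitBox d) volume ∧
      ∀ᵐ k ∂(volume.restrict (unitBox d)), Γ k ≤ bound k := by
    rcases h with hν0 | hd3
    · refine ⟨fun _ => 1 / ν, ?_, ?_⟩
      · refine integrableOn_const (C := 1/ν) ?_
        rw [unitBox, volume_pi_pi]
        simp [Real.volume_Ico]
      · apply ae_of_all
        intro k
        apply one_div_le_one_div_of_le hν0
        have := hsum_nn k
        nlinarith
    · refine ⟨fun k => (12 * α)⁻¹ * ∏ j : Fin d, Bfun d j (k j), ?_, ?_⟩
      · exact ((prod_integrable d).const_mul _).integrableOn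
      · filter_upwards [ae_restrict_mem measBox, ae_restrict_of_ae hae] with k hk hk0
        exact key_bound d hd3 α ν hα hν k hk (fun j _ => hk0 j)
  -- dominated convergence
  have key := tendsto_integral_filter_of_dominated_convergence
    (μ := volume.restrict (unitBox d)) (l := 𝓝[>] (0:ℝ))
    (F := fun lam k => lam ^ 2 * (Γ k / (lam + PhiRate d k) ^ 2))
    (f := fun _ => (0:ℝ)) bound
    (by
      apply Eventually.of_forall
      intro lam
      apply Measurable.aestronglyMeasurable
      exact (hΓmeas.div (((continuous_const.add hΦcont).pow 2).measurable)).const_mul _)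
    (by
      filter_upwards [self_mem_nhdsWithin] with lam hlam
      filter_upwards [hbd] with k hbk
      have hl : (0:ℝ) < lam := hlam
      have hφ := hΦnn k
      have hΓk := hΓnn k
      have hnn : 0 ≤ lam ^ 2 * (Γ k / (lam + PhiRate d k) ^ 2) :=
        mul_nonneg (sq_nonneg _) (div_nonneg hΓk (sq_nonneg _))
      rw [Real.norm_eq_abs, abs_of_nonneg hnn]
      have h2 : (0:ℝ) < (lam + PhiRate d k) ^ 2 := by positivity
      have h1 : lam ^ 2 ≤ (lam + PhiRate d k) ^ 2 := by nlinarith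
      have heq : lam ^ 2 * (Γ k / (lam + PhiRate d k) ^ 2) =
          Γ k * (lam ^ 2 / (lam + PhiRate d k) ^ 2) := by ring
      rw [heq]
      calc Γ k * (lam ^ 2 / (lam + PhiRate d k) ^ 2) ≤ Γ k * 1 :=
            mul_le_mul_of_nonneg_left ((div_le_one h2).2 h1) hΓk
        _ = Γ k := mul_one _
        _ ≤ bound k := hbk)
    hbint
    (by
      filter_upwards [ae_restrict_mem measBox, ae_restrict_of_ae hae] with k hk hk0
      have hφ : 0 < PhiRate d k := hΦpos k hk (hk0 ⟨0, hd⟩)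
      have hc : ContinuousAt (fun lam : ℝ => lam ^ 2 * (Γ k / (lam + PhiRate d k) ^ 2)) 0 := by
        apply ContinuousAt.mul
        · exact (continuous_pow 2).continuousAt
        · apply ContinuousAt.div continuousAt_const
          · exact ((continuous_id.add continuous_const).pow 2).continuousAt
          · positivity
      have ht : Tendsto (fun lam : ℝ => lam ^ 2 * (Γ k / (lam + PhiRate d k) ^ 2))
          (𝓝[>] (0:ℝ)) (𝓝 ((0:ℝ) ^ 2 * (Γ k / ((0:ℝ) + PhiRate d k) ^ 2))) :=
        hc.tendsto.mono_left nhdsWithin_le_nhds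
      have h0 : (0:ℝ) ^ 2 * (Γ k / ((0:ℝ) + PhiRate d k) ^ 2) = 0 := by ring
      rw [h0] at ht
      exact ht)
  have hfe : (fun lam : ℝ => lam ^ 2 *
      ∫ k in unitBox d, Γ k / (lam + PhiRate d k) ^ 2) =
      fun lam : ℝ => ∫ k in unitBox d, lam ^ 2 * (Γ k / (lam + PhiRate d k) ^ 2) := by
    funext lam
    rw [MeasureTheory.integral_const_mul]
  rw [hfe]
  simpa using key
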